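/- arXiv:2501.12145 — 2 statements merged into one kernel-verified Lean document; each statement's English description precedes it below -/
import Mathlib

section
/- Under the stated assumptions, for all j, ℓ ∈ {1,…,d} and all x in the interior of B_M^d where the map ξ ↦ α(ξ, −x·ξ) has no jump (i.e. for almost every x), the second-order partial derivative of u admits the representation ∂_j ∂_ℓ u(x) = ∫_{ℝ^d} ξ_j ξ_ℓ α(ξ, −x·ξ) dξ. -/
open MeasureTheory
open scoped BigOperators

open scoped BigOperators

/-- `𝒢(ξ) = |G(ξ)| + |G(−ξ)|`. -/
noncomputable def calG {d : ℕ} (G : EuclideanSpace ℝ (Fin d) → ℂ)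
    (ξ : EuclideanSpace ℝ (Fin d)) : ℝ :=
  ‖G ξ‖ + ‖G (-ξ)‖

/-- `g̃(ξ) = 2 Re G(ξ) − Im G(ξ)`. -/
noncomputable def gTilde {d : ℕ} (G : EuclideanSpace ℝ (Fin d) → ℂ)
    (ξ : EuclideanSpace ℝ (Fin d)) : ℝ :=
  2 * (G ξ).re - (G ξ).im

/-- `β(ξ,u) = Re[e^{−iu} G(ξ) + e^{iu} G(−ξ)]`. -/
noncomputable def betaFn {d : ℕ} (G : EuclideanSpace ℝ (Fin d) → ℂ)
    (ξ : EuclideanSpace ℝ (Fin d)) (u : ℝ) : ℝ :=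
  (Complex.exp (-(Complex.I * (u : ℂ))) * G ξ + Complex.exp (Complex.I * (u : ℂ)) * G (-ξ)).re

/-- `α(ξ,u) = −1_{(−M‖ξ‖₁,0]}(u) β(ξ,u) + 1_{[0,1]}(u) g̃(ξ) − 1_{[−1,0]}(u) g̃(−ξ)`. -/
noncomputable def alphaFn {d : ℕ} (M : ℝ) (G : EuclideanSpace ℝ (Fin d) → ℂ)
    (ξ : EuclideanSpace ℝ (Fin d)) (u : ℝ) : ℝ :=
  -Set.indicator (Set.Ioc (-(M * ∑ i, |ξ i|)) 0) (fun _ => (1 : ℝ)) u * betaFn G ξ u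
    + Set.indicator (Set.Icc (0 : ℝ) 1) (fun _ => (1 : ℝ)) u * gTilde G ξ
    - Set.indicator (Set.Icc (-1 : ℝ) 0) (fun _ => (1 : ℝ)) u * gTilde G (-ξ)


variable {d : ℕ}
local notation "E" => EuclideanSpace ℝ (Fin d)

noncomputable def Kf (ξ x : E) : ℂ := Complex.exp (Complex.I * ((inner ℝ x ξ : ℝ) : ℂ))

noncomputable def D1 (c : ℂ) (ξ : E) : E →L[ℝ] ℂ := (innerSL ℝ ξ).smulRight c

lemma hasFDerivAt_inner' (ξ x : E) : HasFDerivAt (fun y : E => ((inner ℝ y ξ : ℝ) : ℂ))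
    (Complex.ofRealCLM.comp (innerSL ℝ ξ)) x := by
  have h1 : HasFDerivAt (fun y : E => (inner ℝ y ξ : ℝ)) (innerSL ℝ ξ) x := by
    refine ((innerSL ℝ ξ).hasFDerivAt (x := x)).congr_of_eventuallyEq ?_
    filter_upwards with y
    simp [mul_comm, real_inner_comm]
  exact Complex.ofRealCLM.hasFDerivAt.comp x h1

lemma D1_apply (c : ℂ) (ξ v : E) : D1 c ξ v = ((inner ℝ ξ v : ℝ) : ℂ) * c := by
  simp [D1, smul_eq_mul]

lemma hasFDerivAt_K_mul (H : E → ℂ) (ξ x : E) :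
    HasFDerivAt (fun y : E => Kf ξ y * H ξ) (D1 (Complex.I * Kf ξ x * H ξ) ξ) x := by
  have h2 : HasFDerivAt (fun y : E => Complex.I * ((inner ℝ y ξ : ℝ) : ℂ))
      ((Complex.I : ℂ) • (Complex.ofRealCLM.comp (innerSL ℝ ξ))) x :=
    (hasFDerivAt_inner' ξ x).const_mul Complex.I
  have h4 := (h2.cexp).mul_const (H ξ)
  refine h4.congr_fderiv ?_
  ext v
  simp [D1, Kf, smul_eq_mul, real_inner_comm]
  ring

lemma abs_Kf (ξ x : E) : ‖Kf ξ x‖ = 1 := by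
  rw [Kf, Complex.norm_exp]
  simp

lemma norm_D1 (c : ℂ) (ξ : E) : ‖D1 c ξ‖ ≤ ‖ξ‖ * ‖c‖ := by
  rw [D1, ContinuousLinearMap.norm_smulRight_apply]
  gcongr
  exact innerSL_apply_norm ℝ ξ ▸ le_rfl

set_option maxHeartbeats 1000000 in
lemma aesm_D1 (c : E → ℂ) (hc : AEStronglyMeasurable c (volume : Measure E)) :
    AEStronglyMeasurable (fun ξ : E => D1 (c ξ) ξ) (volume : Measure E) := by
  have h1 : AEStronglyMeasurable (fun ξ : E => ((innerSL ℝ ξ : E →L[ℝ] ℝ), c ξ)) volume :=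
    AEStronglyMeasurable.prodMk
      ((innerSL ℝ : E →L[ℝ] E →L[ℝ] ℝ).continuous.aestronglyMeasurable) hc
  have h2 : Continuous (fun p : (E →L[ℝ] ℝ) × ℂ => p.1.smulRight p.2) :=
    (isBoundedBilinearMap_smulRight :
      IsBoundedBilinearMap ℝ fun p : (E →L[ℝ] ℝ) × ℂ => p.1.smulRight p.2).continuous
  have h3 := h2.comp_aestronglyMeasurable h1
  exact h3

lemma aesm_KH (H : E → ℂ) (hH : AEStronglyMeasurable H (volume : Measure E)) (y : E) :
    AEStronglyMeasurable (fun ξ : E => Kf ξ y * H ξ) (volume : Measure E) := by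
  apply AEStronglyMeasurable.mul _ hH
  exact (Complex.continuous_exp.comp (continuous_const.mul (Complex.continuous_ofReal.comp
    (Continuous.inner continuous_const continuous_id)))).aestronglyMeasurable

lemma key_deriv (H : E → ℂ) (hH : AEStronglyMeasurable H (volume : Measure E))
    (hHi : Integrable (fun ξ : E => (1 + ‖ξ‖) * ‖H ξ‖)) (x : E) :
    HasFDerivAt (fun y : E => ∫ ξ : E, Kf ξ y * H ξ)
      (∫ ξ : E, D1 (Complex.I * Kf ξ x * H ξ) ξ) x := by
  apply hasFDerivAt_integral_of_dominated_of_fderiv_le (s := Set.univ) Filter.univ_mem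
    (F := fun y (ξ : E) => Kf ξ y * H ξ)
    (F' := fun y (ξ : E) => D1 (Complex.I * Kf ξ y * H ξ) ξ)
    (bound := fun ξ : E => (1 + ‖ξ‖) * ‖H ξ‖)
  · filter_upwards with y using aesm_KH H hH y
  · refine hHi.mono (aesm_KH H hH x) ?_
    filter_upwards with ξ
    rw [norm_mul, abs_Kf, one_mul]
    rw [Real.norm_eq_abs, abs_mul, abs_norm, _root_.abs_of_nonneg (by positivity : (0:ℝ) ≤ 1 + ‖ξ‖)]
    nlinarith [norm_nonneg (H ξ), norm_nonneg ξ]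
  · exact aesm_D1 _ (by
      apply AEStronglyMeasurable.mul _ hH
      apply AEStronglyMeasurable.mul aestronglyMeasurable_const
      exact (Complex.continuous_exp.comp (continuous_const.mul (Complex.continuous_ofReal.comp
        (Continuous.inner continuous_const continuous_id)))).aestronglyMeasurable)
  · filter_upwards with ξ y _
    calc ‖D1 (Complex.I * Kf ξ y * H ξ) ξ‖ ≤ ‖ξ‖ * ‖Complex.I * Kf ξ y * H ξ‖ := norm_D1 _ _
    _ ≤ (1 + ‖ξ‖) * ‖H ξ‖ := by
        rw [norm_mul, norm_mul,
          abs_Kf, Complex.norm_I]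
        have := norm_nonneg (H ξ)
        nlinarith [norm_nonneg ξ]
  · exact hHi
  · filter_upwards with ξ y _ using hasFDerivAt_K_mul H ξ y

lemma integrable_D1 (H : E → ℂ) (hH : AEStronglyMeasurable H (volume : Measure E))
    (hHi : Integrable (fun ξ : E => (1 + ‖ξ‖) * ‖H ξ‖)) (x : E) :
    Integrable (fun ξ : E => D1 (Complex.I * Kf ξ x * H ξ) ξ) := by
  refine hHi.mono (aesm_D1 _ ?_) ?_
  · apply AEStronglyMeasurable.mul _ hH
    apply AEStronglyMeasurable.mul aestronglyMeasurable_const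
    exact (Complex.continuous_exp.comp (continuous_const.mul (Complex.continuous_ofReal.comp
        (Continuous.inner continuous_const continuous_id)))).aestronglyMeasurable
  · filter_upwards with ξ
    calc ‖D1 (Complex.I * Kf ξ x * H ξ) ξ‖ ≤ ‖ξ‖ * ‖Complex.I * Kf ξ x * H ξ‖ := norm_D1 _ _
    _ ≤ ‖(1 + ‖ξ‖) * ‖H ξ‖‖ := by
        rw [norm_mul, norm_mul,
          abs_Kf, Complex.norm_I, Real.norm_eq_abs, abs_mul, abs_norm]
        have := norm_nonneg (H ξ)
        nlinarith [norm_nonneg ξ, abs_nonneg (1 + ‖ξ‖), le_abs_self (1 + ‖ξ‖)]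

lemma abs_apply_le_norm (y : E) (i : Fin d) : |y i| ≤ ‖y‖ := by
  rw [EuclideanSpace.norm_eq]
  have h1 : |y i| = Real.sqrt (|y i| ^ 2) := by
    rw [Real.sqrt_sq_eq_abs, _root_.abs_abs]
  rw [h1]
  apply Real.sqrt_le_sqrt
  exact Finset.single_le_sum (f := fun i => |y i| ^ 2) (fun i _ => by positivity) (Finset.mem_univ i)

noncomputable def H2 (G : EuclideanSpace ℝ (Fin d) → ℂ) (l : Fin d) (ξ : EuclideanSpace ℝ (Fin d)) : ℂ :=
  Complex.I * ((ξ l : ℝ) : ℂ) * G ξ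

lemma hG1 (G : E → ℂ) (hG : Measurable G) (hInt : Integrable (fun ξ : E =>
    (1 + ‖ξ‖) ^ 2 * ((‖G ξ‖ + ‖G (-ξ)‖)))) : Integrable (fun ξ : E => (1 + ‖ξ‖) * ‖G ξ‖) := by
  refine hInt.mono ?_ ?_
  · exact (continuous_const.add continuous_norm).aestronglyMeasurable.mul
      (continuous_norm.measurable.comp hG).aestronglyMeasurable
  · filter_upwards with ξ
    have h0 : (0:ℝ) ≤ 1 + ‖ξ‖ := by positivity
    have h1 : (1:ℝ) ≤ 1 + ‖ξ‖ := le_add_of_nonneg_right (norm_nonneg ξ)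
    rw [Real.norm_eq_abs, Real.norm_eq_abs, abs_mul, abs_mul, abs_norm,
      _root_.abs_of_nonneg h0, _root_.abs_of_nonneg (by positivity : (0:ℝ) ≤ (1+‖ξ‖)^2),
      _root_.abs_of_nonneg (by positivity : (0:ℝ) ≤ ‖G ξ‖ + ‖G (-ξ)‖)]
    nlinarith [mul_nonneg (mul_nonneg h0 (norm_nonneg ξ)) (norm_nonneg (G ξ)),
      mul_nonneg (mul_nonneg h0 h0) (norm_nonneg (G (-ξ))), norm_nonneg (G ξ)]

lemma hH2i (G : E → ℂ) (l : Fin d) (hG : Measurable G) (hInt : Integrable (fun ξ : E =>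
    (1 + ‖ξ‖) ^ 2 * ((‖G ξ‖ + ‖G (-ξ)‖)))) : Integrable (fun ξ : E => (1 + ‖ξ‖) * ‖H2 G l ξ‖) := by
  refine hInt.mono ?_ ?_
  · refine (continuous_const.add continuous_norm).aestronglyMeasurable.mul ?_
    refine (continuous_norm.measurable.comp ?_).aestronglyMeasurable
    exact (measurable_const.mul ((Complex.measurable_ofReal).comp
      ((PiLp.continuous_apply _ _ l).measurable : Measurable fun ξ : E => ξ l))).mul hG
  · filter_upwards with ξ
    have h0 : (0:ℝ) ≤ 1 + ‖ξ‖ := by positivity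
    have hl : |ξ l| ≤ ‖ξ‖ := abs_apply_le_norm ξ l
    rw [Real.norm_eq_abs, Real.norm_eq_abs, abs_mul, abs_mul, abs_norm,
      _root_.abs_of_nonneg h0, _root_.abs_of_nonneg (by positivity : (0:ℝ) ≤ (1+‖ξ‖)^2),
      _root_.abs_of_nonneg (by positivity : (0:ℝ) ≤ ‖G ξ‖ + ‖G (-ξ)‖)]
    have : ‖H2 G l ξ‖ = |ξ l| * ‖G ξ‖ := by
      rw [H2, norm_mul, norm_mul, Complex.norm_I, Complex.norm_real, Real.norm_eq_abs, one_mul]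
    rw [this]
    nlinarith [mul_nonneg (mul_nonneg h0 h0) (norm_nonneg (G (-ξ))),
      mul_le_mul_of_nonneg_right (mul_le_mul_of_nonneg_left hl h0) (norm_nonneg (G ξ)),
      mul_nonneg h0 (norm_nonneg (G ξ)), norm_nonneg ξ, norm_nonneg (G ξ)]

lemma aesm_H2 (G : E → ℂ) (l : Fin d) (hG : Measurable G) : AEStronglyMeasurable (H2 G l) (volume : Measure E) :=
  ((measurable_const.mul ((Complex.measurable_ofReal).comp
      ((PiLp.continuous_apply _ _ l).measurable : Measurable fun ξ : E => ξ l))).mul hG).aestronglyMeasurable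

/-- First-stage conclusion: for `y` in the ball, `∂_l u(y) = Re (Vf y)`. -/
lemma fderiv_u_eq (G : E → ℂ) (M : ℝ) (l : Fin d) (hG : Measurable G) (hInt : Integrable (fun ξ : E =>
    (1 + ‖ξ‖) ^ 2 * ((‖G ξ‖ + ‖G (-ξ)‖)))) (u : E → ℝ)
    (hrep : ∀ x : E, (∀ i, |x i| ≤ M) → (u x : ℂ) = ∫ ξ : E, Kf ξ x * G ξ)
    (y : E) (hy : y ∈ Metric.ball (0 : E) M) :
    fderiv ℝ u y (EuclideanSpace.single l 1)
      = (∫ ξ : E, Kf ξ y * H2 G l ξ).re := by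
  have hball : ∀ z : E, z ∈ Metric.ball (0 : E) M → u z = (∫ ξ : E, Kf ξ z * G ξ).re := by
    intro z hz
    have h1 : ∀ i, |z i| ≤ M := fun i => (abs_apply_le_norm z i).trans
      (by simpa [mem_ball_iff_norm] using (mem_ball_zero_iff.mp hz).le)
    have := hrep z h1
    have : ((u z : ℂ)).re = (∫ ξ : E, Kf ξ z * G ξ).re := by rw [this]
    simpa using this
  have hev : u =ᶠ[nhds y] fun z => (∫ ξ : E, Kf ξ z * G ξ).re := by
    filter_upwards [Metric.isOpen_ball.mem_nhds hy] with z hz using hball z hz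
  have hd1 : HasFDerivAt (fun z : E => ∫ ξ : E, Kf ξ z * G ξ)
      (∫ ξ : E, D1 (Complex.I * Kf ξ y * G ξ) ξ) y :=
    key_deriv G hG.aestronglyMeasurable (hG1 G hG hInt) y
  have hre : HasFDerivAt (fun z : E => (∫ ξ : E, Kf ξ z * G ξ).re)
      (Complex.reCLM.comp (∫ ξ : E, D1 (Complex.I * Kf ξ y * G ξ) ξ)) y :=
    (Complex.reCLM.hasFDerivAt).comp y hd1
  have hu : HasFDerivAt u
      (Complex.reCLM.comp (∫ ξ : E, D1 (Complex.I * Kf ξ y * G ξ) ξ)) y :=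
    hre.congr_of_eventuallyEq hev
  rw [hu.fderiv]
  have hDi := integrable_D1 G hG.aestronglyMeasurable (hG1 G hG hInt) y
  rw [ContinuousLinearMap.comp_apply, ContinuousLinearMap.integral_apply hDi]
  simp only [Complex.reCLM_apply]
  congr 1
  apply integral_congr_ae
  filter_upwards with ξ
  rw [D1_apply, H2]
  have : (inner ℝ ξ (EuclideanSpace.single l (1:ℝ)) : ℝ) = ξ l := by
    rw [EuclideanSpace.inner_single_right]; simp
  rw [this]; ring


lemma fderiv2_eq (G : E → ℂ) (M : ℝ) (l j : Fin d) (hG : Measurable G)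
    (hInt : Integrable (fun ξ : E =>
      (1 + ‖ξ‖) ^ 2 * ((‖G ξ‖ + ‖G (-ξ)‖)))) (u : E → ℝ)
    (hrep : ∀ x : E, (∀ i, |x i| ≤ M) → (u x : ℂ) = ∫ ξ : E, Kf ξ x * G ξ)
    (x : E) (hx : x ∈ Metric.ball (0 : E) M) :
    fderiv ℝ (fun y => fderiv ℝ u y (EuclideanSpace.single l 1)) x (EuclideanSpace.single j 1)
      = ∫ ξ : E, -(ξ j * ξ l) * (Kf ξ x * G ξ).re := by
  have hev : (fun y => fderiv ℝ u y (EuclideanSpace.single l 1))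
      =ᶠ[nhds x] fun y => (∫ ξ : E, Kf ξ y * H2 G l ξ).re := by
    filter_upwards [Metric.isOpen_ball.mem_nhds hx] with y hy
    exact fderiv_u_eq G M l hG hInt u hrep y hy
  have hd2 : HasFDerivAt (fun y : E => ∫ ξ : E, Kf ξ y * H2 G l ξ)
      (∫ ξ : E, D1 (Complex.I * Kf ξ x * H2 G l ξ) ξ) x :=
    key_deriv (H2 G l) (aesm_H2 G l hG) (hH2i G l hG hInt) x
  have hre : HasFDerivAt (fun y : E => (∫ ξ : E, Kf ξ y * H2 G l ξ).re)
      (Complex.reCLM.comp (∫ ξ : E, D1 (Complex.I * Kf ξ x * H2 G l ξ) ξ)) x :=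
    (Complex.reCLM.hasFDerivAt).comp x hd2
  have hu : HasFDerivAt (fun y => fderiv ℝ u y (EuclideanSpace.single l 1))
      (Complex.reCLM.comp (∫ ξ : E, D1 (Complex.I * Kf ξ x * H2 G l ξ) ξ)) x :=
    hre.congr_of_eventuallyEq hev
  rw [hu.fderiv]
  have hDi := integrable_D1 (H2 G l) (aesm_H2 G l hG) (hH2i G l hG hInt) x
  rw [ContinuousLinearMap.comp_apply, ContinuousLinearMap.integral_apply hDi]
  simp only [Complex.reCLM_apply]
  have hint2 : Integrable (fun ξ : E =>
      D1 (Complex.I * Kf ξ x * H2 G l ξ) ξ (EuclideanSpace.single j 1)) :=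
    (ContinuousLinearMap.apply ℝ ℂ (EuclideanSpace.single j (1:ℝ))).integrable_comp hDi
  have h3 := integral_re hint2
  simp only [RCLike.re_to_complex] at h3
  rw [← h3]
  apply integral_congr_ae
  filter_upwards with ξ
  rw [D1_apply, H2]
  have h1 : (inner ℝ ξ (EuclideanSpace.single j (1:ℝ)) : ℝ) = ξ j := by
    rw [EuclideanSpace.inner_single_right]; simp
  rw [h1]
  have h2 : ((ξ j : ℝ) : ℂ) * (Complex.I * Kf ξ x * (Complex.I * ((ξ l : ℝ):ℂ) * G ξ))
      = ((-(ξ j * ξ l) : ℝ) : ℂ) * (Kf ξ x * G ξ) := by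
    push_cast
    linear_combination (((ξ j : ℝ):ℂ) * ((ξ l : ℝ):ℂ) * Kf ξ x * G ξ) * Complex.I_mul_I
  rw [h2, Complex.re_ofReal_mul]

-- ### RHS part

lemma abs_betaFn_le (G : E → ℂ) (ξ : E) (t : ℝ) :
    |betaFn G ξ t| ≤ ‖G ξ‖ + ‖G (-ξ)‖ := by
  unfold betaFn
  refine (Complex.abs_re_le_norm _).trans ?_
  refine (norm_add_le _ _).trans ?_
  rw [norm_mul, norm_mul, Complex.norm_exp, Complex.norm_exp]
  simp

lemma abs_gTilde_le (G : E → ℂ) (ξ : E) : |gTilde G ξ| ≤ 3 * ‖G ξ‖ := by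
  unfold gTilde
  have h1 := abs_le.mp (Complex.abs_re_le_norm (G ξ))
  have h2 := abs_le.mp (Complex.abs_im_le_norm (G ξ))
  rw [abs_le]
  constructor <;> linarith [h1.1, h1.2, h2.1, h2.2]

lemma abs_indicator_le (S : Set ℝ) (t : ℝ) :
    |Set.indicator S (fun _ => (1:ℝ)) t| ≤ 1 := by
  classical
  rw [Set.indicator_apply]
  split <;> simp

lemma abs_alphaFn_le (M : ℝ) (G : E → ℂ) (ξ : E) (t : ℝ) :
    |alphaFn M G ξ t| ≤ 7 * (‖G ξ‖ + ‖G (-ξ)‖) := by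
  unfold alphaFn
  have h1 : |(-Set.indicator (Set.Ioc (-(M * ∑ i, |ξ i|)) 0) (fun _ => (1:ℝ)) t * betaFn G ξ t)|
      ≤ ‖G ξ‖ + ‖G (-ξ)‖ := by
    rw [abs_mul, abs_neg]
    refine le_trans (mul_le_of_le_one_left (abs_nonneg _) (abs_indicator_le _ _)) ?_
    exact abs_betaFn_le G ξ t
  have h2 : |Set.indicator (Set.Icc (0:ℝ) 1) (fun _ => (1:ℝ)) t * gTilde G ξ|
      ≤ 3 * ‖G ξ‖ := by
    rw [abs_mul]
    exact le_trans (mul_le_of_le_one_left (abs_nonneg _) (abs_indicator_le _ _))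
      (abs_gTilde_le G ξ)
  have h3 : |Set.indicator (Set.Icc (-1:ℝ) 0) (fun _ => (1:ℝ)) t * gTilde G (-ξ)|
      ≤ 3 * ‖G (-ξ)‖ := by
    rw [abs_mul]
    refine le_trans (mul_le_of_le_one_left (abs_nonneg _) (abs_indicator_le _ _)) ?_
    exact abs_gTilde_le G (-ξ)
  refine (abs_sub _ _).trans ?_
  refine le_trans (add_le_add (abs_add_le _ _) le_rfl) ?_
  have ha := norm_nonneg (G ξ)
  have hb := norm_nonneg (G (-ξ))
  linarith

lemma sum_abs_neg (ξ : E) : (∑ i, |(-ξ : E) i|) = ∑ i, |ξ i| := by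
  apply Finset.sum_congr rfl
  intro i _
  simp

lemma alpha_add (M : ℝ) (G : E → ℂ) (ξ : E) (s : ℝ) (hs : s ≠ 0)
    (hP : |s| < M * ∑ i, |ξ i|) :
    alphaFn M G ξ (-s) + alphaFn M G (-ξ) s = -(betaFn G ξ (-s)) := by
  have hbeta : betaFn G (-ξ) s = betaFn G ξ (-s) := by
    unfold betaFn
    rw [neg_neg]
    congr 1
    push_cast
    rw [add_comm]
    ring_nf
  have e1 : Set.indicator (Set.Icc (0:ℝ) 1) (fun _ => (1:ℝ)) (-s)
      = Set.indicator (Set.Icc (-1:ℝ) 0) (fun _ => (1:ℝ)) s := by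
    simp only [Set.indicator_apply, Set.mem_Icc]
    by_cases h : -1 ≤ s ∧ s ≤ 0
    · rw [if_pos (by constructor <;> linarith [h.1, h.2]), if_pos h]
    · rw [if_neg (by intro ⟨a, b⟩; exact h ⟨by linarith, by linarith⟩), if_neg h]
  have e2 : Set.indicator (Set.Icc (-1:ℝ) 0) (fun _ => (1:ℝ)) (-s)
      = Set.indicator (Set.Icc (0:ℝ) 1) (fun _ => (1:ℝ)) s := by
    simp only [Set.indicator_apply, Set.mem_Icc]
    by_cases h : 0 ≤ s ∧ s ≤ 1
    · rw [if_pos (by constructor <;> linarith [h.1, h.2]), if_pos h]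
    · rw [if_neg (by intro ⟨a, b⟩; exact h ⟨by linarith, by linarith⟩), if_neg h]
  have habs := abs_lt.mp hP
  have e3 : Set.indicator (Set.Ioc (-(M * ∑ i, |ξ i|)) 0) (fun _ => (1:ℝ)) (-s)
      + Set.indicator (Set.Ioc (-(M * ∑ i, |ξ i|)) 0) (fun _ => (1:ℝ)) s = 1 := by
    rcases hs.lt_or_gt with h | h
    · rw [Set.indicator_of_notMem (by rw [Set.mem_Ioc]; push_neg; intro _; linarith),
        Set.indicator_of_mem (by rw [Set.mem_Ioc]; exact ⟨by linarith [habs.1], le_of_lt h⟩)]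
      norm_num
    · rw [Set.indicator_of_mem (by rw [Set.mem_Ioc]; exact ⟨by linarith [habs.2], by linarith⟩),
        Set.indicator_of_notMem (by rw [Set.mem_Ioc]; push_neg; intro _; linarith)]
      norm_num
  unfold alphaFn
  rw [sum_abs_neg, hbeta, neg_neg, e1, e2]
  linear_combination (-(betaFn G ξ (-s))) * e3

lemma beta_eq_re (G : E → ℂ) (ξ x : E) :
    betaFn G ξ (-(inner ℝ x ξ : ℝ)) = (Kf ξ x * G ξ).re + (Kf (-ξ) x * G (-ξ)).re := by
  unfold betaFn Kf
  rw [← Complex.add_re]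
  congr 1
  rw [inner_neg_right]
  push_cast
  ring_nf

lemma measurable_inner_right (x : E) : Measurable fun ξ : E => (inner ℝ x ξ : ℝ) :=
  (Continuous.inner continuous_const continuous_id).measurable

lemma measurable_betaFn (G : E → ℂ) (hG : Measurable G) (x : E) :
    Measurable fun ξ : E => betaFn G ξ (-(inner ℝ x ξ : ℝ)) := by
  unfold betaFn
  apply Complex.measurable_re.comp
  apply Measurable.add
  · apply Measurable.mul _ hG
    apply Complex.measurable_exp.comp
    exact (measurable_const.mul (Complex.measurable_ofReal.comp
      (measurable_inner_right x).neg)).neg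
  · apply Measurable.mul _ (hG.comp measurable_neg)
    apply Complex.measurable_exp.comp
    exact measurable_const.mul (Complex.measurable_ofReal.comp (measurable_inner_right x).neg)

lemma measurable_gTilde (G : E → ℂ) (hG : Measurable G) : Measurable fun ξ : E => gTilde G ξ := by
  unfold gTilde
  exact (measurable_const.mul (Complex.measurable_re.comp hG)).sub (Complex.measurable_im.comp hG)

lemma measurable_sum_abs : Measurable fun ξ : E => ∑ i, |ξ i| := by
  apply Finset.measurable_sum
  intro i _
  exact (PiLp.continuous_apply _ _ i).measurable.abs

lemma measurable_indicator_comp (x : E) (a b : ℝ) :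
    Measurable fun ξ : E =>
      Set.indicator (Set.Icc a b) (fun _ => (1:ℝ)) (-(inner ℝ x ξ : ℝ)) := by
  classical
  simp only [Set.indicator_apply, Set.mem_Icc]
  apply Measurable.ite _ measurable_const measurable_const
  exact MeasurableSet.inter
    (measurableSet_le measurable_const (measurable_inner_right x).neg)
    (measurableSet_le (measurable_inner_right x).neg measurable_const)

lemma measurable_alpha (M : ℝ) (G : E → ℂ) (hG : Measurable G) (x : E) :
    Measurable fun ξ : E => alphaFn M G ξ (-(inner ℝ x ξ : ℝ)) := by
  classical
  unfold alphaFn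
  apply Measurable.sub
  apply Measurable.add
  · apply Measurable.mul _ (measurable_betaFn G hG x)
    apply Measurable.neg
    simp only [Set.indicator_apply, Set.mem_Ioc]
    apply Measurable.ite _ measurable_const measurable_const
    exact MeasurableSet.inter
      (measurableSet_lt (measurable_const.mul measurable_sum_abs).neg
        (measurable_inner_right x).neg)
      (measurableSet_le (measurable_inner_right x).neg measurable_const)
  · exact (measurable_indicator_comp x 0 1).mul (measurable_gTilde G hG)
  · exact (measurable_indicator_comp x (-1) 0).mul
      ((measurable_gTilde G hG).comp measurable_neg)

lemma inner_abs_le (x ξ : E) : |(inner ℝ x ξ : ℝ)| ≤ ‖x‖ * ∑ i, |ξ i| := by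
  rw [PiLp.inner_apply]
  refine (Finset.abs_sum_le_sum_abs _ _).trans ?_
  rw [Finset.mul_sum]
  apply Finset.sum_le_sum
  intro i _
  rw [RCLike.inner_apply, starRingEnd_apply, star_trivial, abs_mul, mul_comm]
  exact mul_le_mul_of_nonneg_right (abs_apply_le_norm x i) (abs_nonneg _)

lemma hyperplane_null (x : E) (hx : x ≠ 0) :
    (volume : Measure E) {ξ : E | (inner ℝ x ξ : ℝ) = 0} = 0 := by
  have h1 : {ξ : E | (inner ℝ x ξ : ℝ) = 0} = (LinearMap.ker (innerSL ℝ x : E →ₗ[ℝ] ℝ) : Set E) := by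
    ext ξ
    simp [LinearMap.mem_ker]
  rw [h1]
  apply Measure.addHaar_submodule
  intro h
  apply hx
  have hz : x ∈ LinearMap.ker (innerSL ℝ x : E →ₗ[ℝ] ℝ) := h ▸ Submodule.mem_top
  have : (inner ℝ x x : ℝ) = 0 := hz
  exact inner_self_eq_zero.mp this

lemma rhs_eq (G : E → ℂ) (M : ℝ) (j l : Fin d) (hG : Measurable G)
    (hInt : Integrable (fun ξ : E =>
      (1 + ‖ξ‖) ^ 2 * ((‖G ξ‖ + ‖G (-ξ)‖))))
    (x : E) (hx : ‖x‖ < M) (hx0 : x ≠ 0) :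
    ∫ ξ : E, ξ j * ξ l * alphaFn M G ξ (-(inner ℝ x ξ : ℝ))
      = ∫ ξ : E, -(ξ j * ξ l) * (Kf ξ x * G ξ).re := by
  set W : E → ℝ := fun ξ => ξ j * ξ l * alphaFn M G ξ (-(inner ℝ x ξ : ℝ)) with hW
  set T : E → ℝ := fun ξ => -(ξ j * ξ l) * (Kf ξ x * G ξ).re with hT
  have habs2 : ∀ ξ : E, |ξ j * ξ l| ≤ (1 + ‖ξ‖)^2 := by
    intro ξ
    rw [abs_mul]
    have hj := abs_apply_le_norm ξ j
    have hl := abs_apply_le_norm ξ l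
    have h0 := norm_nonneg ξ
    nlinarith [abs_nonneg (ξ j), abs_nonneg (ξ l)]
  have hWint : Integrable W := by
    refine (hInt.const_mul 7).mono ?_ ?_
    · exact (((PiLp.continuous_apply _ _ j).measurable.mul
        (PiLp.continuous_apply _ _ l).measurable).mul (measurable_alpha M G hG x)).aestronglyMeasurable
    · filter_upwards with ξ
      rw [Real.norm_eq_abs, Real.norm_eq_abs, hW]
      simp only
      rw [abs_mul]
      have h1 := abs_alphaFn_le M G ξ (-(inner ℝ x ξ : ℝ))
      have h2 := habs2 ξ
      have h3 : (0:ℝ) ≤ (1 + ‖ξ‖)^2 := by positivity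
      have h4 : |7 * ((1 + ‖ξ‖) ^ 2 * (‖G ξ‖ + ‖G (-ξ)‖))|
          = 7 * ((1 + ‖ξ‖) ^ 2 * (‖G ξ‖ + ‖G (-ξ)‖)) := by
        rw [_root_.abs_of_nonneg]
        positivity
      rw [h4]
      nlinarith [abs_nonneg (ξ j * ξ l), abs_nonneg (alphaFn M G ξ (-(inner ℝ x ξ : ℝ))),
        norm_nonneg (G ξ), norm_nonneg (G (-ξ))]
  have hTint : Integrable T := by
    refine hInt.mono ?_ ?_
    · apply Measurable.aestronglyMeasurable
      apply Measurable.mul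
      · exact ((PiLp.continuous_apply _ _ j).measurable.mul (PiLp.continuous_apply _ _ l).measurable).neg
      · apply Complex.measurable_re.comp
        apply Measurable.mul _ hG
        unfold Kf
        apply Complex.measurable_exp.comp
        exact measurable_const.mul (Complex.measurable_ofReal.comp (measurable_inner_right x))
    · filter_upwards with ξ
      rw [Real.norm_eq_abs, Real.norm_eq_abs, hT]
      simp only
      rw [abs_mul, abs_neg]
      have h1 : |(Kf ξ x * G ξ).re| ≤ ‖G ξ‖ + ‖G (-ξ)‖ := by
        refine (Complex.abs_re_le_norm _).trans ?_
        rw [norm_mul, abs_Kf, one_mul]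
        linarith [norm_nonneg (G (-ξ))]
      have h2 := habs2 ξ
      have h3 : (0:ℝ) ≤ (1 + ‖ξ‖)^2 := by positivity
      rw [_root_.abs_of_nonneg (by positivity : (0:ℝ) ≤ (1 + ‖ξ‖) ^ 2 * (‖G ξ‖ + ‖G (-ξ)‖))]
      nlinarith [abs_nonneg (ξ j * ξ l), abs_nonneg ((Kf ξ x * G ξ).re),
        norm_nonneg (G ξ), norm_nonneg (G (-ξ))]
  have hWneg : Integrable (fun ξ : E => W (-ξ)) := hWint.comp_neg
  have hTneg : Integrable (fun ξ : E => T (-ξ)) := hTint.comp_neg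
  have key : ∀ᵐ ξ : E, W ξ + W (-ξ) = T ξ + T (-ξ) := by
    have hnull := hyperplane_null x hx0
    rw [ae_iff]
    refine measure_mono_null ?_ hnull
    intro ξ hξ
    simp only [Set.mem_setOf_eq] at hξ ⊢
    by_contra hs
    apply hξ
    -- hs : inner ℝ x ξ ≠ 0
    set s : ℝ := (inner ℝ x ξ : ℝ) with hsdef
    have hξ0 : ξ ≠ 0 := by
      intro h
      apply hs
      rw [hsdef, h, inner_zero_right]
    have hsumpos : 0 < ∑ i, |ξ i| := by
      have h1 : ∃ i, ξ i ≠ 0 := by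
        by_contra hc
        push_neg at hc
        apply hξ0
        ext i
        exact hc i
      obtain ⟨i, hi⟩ := h1
      refine Finset.sum_pos' (fun i _ => abs_nonneg _) ⟨i, Finset.mem_univ i, abs_pos.mpr hi⟩
    have hP : |s| < M * ∑ i, |ξ i| := by
      refine (inner_abs_le x ξ).trans_lt ?_
      exact mul_lt_mul_of_pos_right hx hsumpos
    have hWsum : W ξ + W (-ξ) = ξ j * ξ l * (alphaFn M G ξ (-s) + alphaFn M G (-ξ) s) := by
      rw [hW]
      simp only
      have h1 : (-ξ : E) j = -(ξ j) := rfl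
      have h2 : (-ξ : E) l = -(ξ l) := rfl
      rw [h1, h2, inner_neg_right, neg_neg]
      ring
    have hTsum : T ξ + T (-ξ) = -(ξ j * ξ l) * ((Kf ξ x * G ξ).re + (Kf (-ξ) x * G (-ξ)).re) := by
      rw [hT]
      simp only
      have h1 : (-ξ : E) j = -(ξ j) := rfl
      have h2 : (-ξ : E) l = -(ξ l) := rfl
      rw [h1, h2]
      ring
    rw [hWsum, hTsum, alpha_add M G ξ s hs hP, ← beta_eq_re G ξ x, ← hsdef]
    ring
  have step : ∫ ξ : E, (W ξ + W (-ξ)) = ∫ ξ : E, (T ξ + T (-ξ)) := integral_congr_ae key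
  rw [integral_add hWint hWneg, integral_add hTint hTneg,
    integral_neg_eq_self (fun ξ : E => W ξ) volume, integral_neg_eq_self (fun ξ : E => T ξ) volume]
    at step
  have : (2:ℝ) * ∫ ξ : E, W ξ = 2 * ∫ ξ : E, T ξ := by linarith
  linarith

/-- with `u(x) = ∫ e^{ix·ξ} G(ξ) dξ` on `[−M,M]^d`, hence also
`u(x) = ∫∫ (x·ξ + t)₊ α(ξ,t) dt dξ`, for all `j, ℓ ∈ {1,…,d}` and almost every `x` in
the interior of `B_M^d` (where `ξ ↦ α(ξ, −x·ξ)` has no jump) the second-order partial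
derivative of `u` satisfies `∂_j ∂_ℓ u(x) = ∫ ξ_j ξ_ℓ α(ξ, −x·ξ) dξ`. -/
theorem second_derivative_representation (d : ℕ) (hd : 0 < d) (M : ℝ) (hM : 1 ≤ M)
    (u : EuclideanSpace ℝ (Fin d) → ℝ)
    (G : EuclideanSpace ℝ (Fin d) → ℂ) (hG : Measurable G)
    (hrep : ∀ x : EuclideanSpace ℝ (Fin d), (∀ i, |x i| ≤ M) →
      (u x : ℂ) = ∫ ξ, Complex.exp (Complex.I * ((inner ℝ x ξ : ℝ) : ℂ)) * G ξ)
    (hrep2 : ∀ x : EuclideanSpace ℝ (Fin d), (∀ i, |x i| ≤ M) →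
      u x = ∫ ξ, ∫ t : ℝ, max ((inner ℝ x ξ : ℝ) + t) 0 * alphaFn M G ξ t)
    (hInt : Integrable (fun ξ : EuclideanSpace ℝ (Fin d) =>
      (1 + ‖ξ‖) ^ 2 * calG G ξ))
    (j l : Fin d) :
    ∀ᵐ x ∂(volume.restrict (Metric.ball (0 : EuclideanSpace ℝ (Fin d)) M)),
      fderiv ℝ (fun y => fderiv ℝ u y (EuclideanSpace.single l 1)) x
          (EuclideanSpace.single j 1) =
        ∫ ξ, ξ j * ξ l * alphaFn M G ξ (-(inner ℝ x ξ : ℝ)) := by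
  haveI : Nonempty (Fin d) := Fin.pos_iff_nonempty.mp hd
  have hInt' : Integrable (fun ξ : EuclideanSpace ℝ (Fin d) =>
      (1 + ‖ξ‖) ^ 2 * ((‖G ξ‖ + ‖G (-ξ)‖))) := hInt
  have hrep' : ∀ x : EuclideanSpace ℝ (Fin d), (∀ i, |x i| ≤ M) →
      (u x : ℂ) = ∫ ξ, Kf ξ x * G ξ := hrep
  have h0null : (volume : Measure (EuclideanSpace ℝ (Fin d))) {(0 : EuclideanSpace ℝ (Fin d))} = 0 := by
    have hbot : ((⊥ : Submodule ℝ (EuclideanSpace ℝ (Fin d))) : Set (EuclideanSpace ℝ (Fin d)))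
        = {0} := Submodule.bot_coe
    rw [← hbot]
    exact Measure.addHaar_submodule _ ⊥ bot_ne_top
  have hne : ∀ᵐ x ∂(volume.restrict (Metric.ball (0 : EuclideanSpace ℝ (Fin d)) M)),
      x ≠ (0 : EuclideanSpace ℝ (Fin d)) := by
    rw [ae_iff]
    refine measure_mono_null (t := {(0 : EuclideanSpace ℝ (Fin d))}) (fun a ha => ?_) ?_
    · simp only [Set.mem_setOf_eq, not_not] at ha
      exact ha ▸ Set.mem_singleton _
    · exact le_antisymm ((Measure.restrict_apply_le _ _).trans_eq h0null) bot_le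
  filter_upwards [ae_restrict_mem Metric.isOpen_ball.measurableSet, hne] with x hx hx0
  have hxn : ‖x‖ < M := mem_ball_zero_iff.mp hx
  rw [fderiv2_eq G M l j hG hInt' u hrep' x hx]
  exact (rhs_eq G M j l hG hInt' x hxn hx0).symm
end

section
/- Let π_A be a radially symmetric probability density on ℝ^d (d ≥ 2) with nonincreasing-enough radial profile so that the stated integrals converge, i.e. π_A(ξ) = π_A*(‖ξ‖₂). Then for every x ∈ ℝ^d with x ≠ 0 and every δ > 0, the slab S = {ξ ∈ ℝ^d : |x·ξ| ≤ δ} satisfies ∫_S π_A(ξ) dξ ≤ (2 ω_{d−1} δ / ‖x‖₂) · (π_A*(0) + ω_d^{−1}), provided π_A* is nonincreasing and π_A*(0) = max π_A*. -/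
open MeasureTheory

open Set Metric ENNReal

lemma lintegral_norm_radial (m : ℕ) [NeZero m] (g : ℝ → ℝ≥0∞) (hg : Measurable g) :
    ∫⁻ ξ : EuclideanSpace ℝ (Fin m), g ‖ξ‖ =
      (m : ℝ≥0∞) * volume (Metric.ball (0 : EuclideanSpace ℝ (Fin m)) 1) *
        ∫⁻ s in Set.Ioi (0:ℝ), ENNReal.ofReal (s ^ (m - 1)) * g s := by
  set E := EuclideanSpace ℝ (Fin m)
  have hdim : Module.finrank ℝ E = m := finrank_euclideanSpace_fin
  have h0 : ∫⁻ ξ : E, g ‖ξ‖ = ∫⁻ ξ in ({0} : Set E)ᶜ, g ‖ξ‖ := by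
    rw [MeasureTheory.restrict_compl_singleton]
  rw [h0, ← lintegral_subtype_comap (measurableSet_singleton (0:E)).compl]
  have h1 := (Measure.measurePreserving_homeomorphUnitSphereProd
      (volume : Measure E)).lintegral_comp_emb
      (Homeomorph.measurableEmbedding _) (fun p => g p.2.1)
  simp only [homeomorphUnitSphereProd_apply_snd_coe] at h1
  rw [show (fun p : ↑(sphere (0:E) 1) × ↑(Ioi (0:ℝ)) => g p.2.1) = (g ∘ Subtype.val ∘ Prod.snd) from rfl] at h1
  rw [h1]
  rw [lintegral_prod _ (hg.comp (measurable_subtype_coe.comp measurable_snd)).aemeasurable]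
  simp only [Function.comp_apply]
  rw [lintegral_const, Measure.toSphere_apply_univ, hdim]
  have h2 : ∫⁻ (y : Ioi (0:ℝ)), g ↑y
      ∂(Measure.volumeIoiPow (m - 1))
      = ∫⁻ s in Ioi (0:ℝ), ENNReal.ofReal (s ^ (m - 1)) * g s := by
    rw [Measure.volumeIoiPow, lintegral_withDensity_eq_lintegral_mul _
      (by fun_prop : Measurable fun r : Ioi (0:ℝ) => ENNReal.ofReal (r.1 ^ (m - 1)))
      (show Measurable fun y : Ioi (0:ℝ) => g y.1 from hg.comp measurable_subtype_coe)]
    rw [← lintegral_subtype_comap measurableSet_Ioi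
      (fun s : ℝ => ENNReal.ofReal (s ^ (m - 1)) * g s)]
    rfl
  rw [h2]
  ring

/-- The surface area `ω_n` of the unit sphere in `ℝ^n`, i.e. `n` times the volume of the
unit ball. -/
noncomputable def sphereArea (n : ℕ) : ℝ :=
  n * (volume (Metric.ball (0 : EuclideanSpace ℝ (Fin n)) 1)).toReal

/-- for a radially symmetric probability density `π_A` on `ℝ^d` (`d ≥ 2`)
with nonincreasing radial profile `π_A*` (so in particular `π_A*(0) = max π_A*`), for every
`x ≠ 0` and `δ > 0`, the slab `S = {ξ : |x·ξ| ≤ δ}` satisfies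
`∫_S π_A ≤ (2 ω_{d−1} δ/‖x‖₂)(π_A*(0) + ω_d⁻¹)`. -/
theorem slab_mass_bound (d : ℕ) (hd : 2 ≤ d)
    (πA : EuclideanSpace ℝ (Fin d) → ℝ) (πAs : ℝ → ℝ)
    (hradial : ∀ ξ, πA ξ = πAs ‖ξ‖)
    (hnonneg : ∀ ξ, 0 ≤ πA ξ) (hmeas : Measurable πAs)
    (hprob : ∫ ξ, πA ξ = 1)
    (hmono : ∀ r s : ℝ, 0 ≤ r → r ≤ s → πAs s ≤ πAs r)
    (hmax : ∀ r : ℝ, πAs r ≤ πAs 0)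
    (x : EuclideanSpace ℝ (Fin d)) (hx : x ≠ 0) (δ : ℝ) (hδ : 0 < δ) :
    (∫ ξ in {ξ : EuclideanSpace ℝ (Fin d) | |(inner ℝ x ξ : ℝ)| ≤ δ}, πA ξ) ≤
      (2 * sphereArea (d - 1) * δ / ‖x‖) * (πAs 0 + (sphereArea d)⁻¹) := by
  obtain ⟨n, rfl⟩ : ∃ n, d = n + 2 := ⟨d - 2, by omega⟩
  have hd1 : n + 2 - 1 = n + 1 := rfl
  -- positivity facts
  have hxn : (0:ℝ) < ‖x‖ := norm_pos_iff.mpr hx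
  have hπ0 : 0 ≤ πAs 0 := by have := hnonneg 0; rwa [hradial, norm_zero] at this
  set V1 : ℝ≥0∞ := volume (Metric.ball (0 : EuclideanSpace ℝ (Fin (n+1))) 1) with hV1
  set V2 : ℝ≥0∞ := volume (Metric.ball (0 : EuclideanSpace ℝ (Fin (n+2))) 1) with hV2
  have hV1pos : 0 < V1 := measure_ball_pos _ _ one_pos
  have hV1top : V1 < ⊤ := measure_ball_lt_top
  have hV2pos : 0 < V2 := measure_ball_pos _ _ one_pos
  have hV2top : V2 < ⊤ := measure_ball_lt_top
  have hs1 : ENNReal.ofReal (sphereArea (n+1)) = (n+1 : ℕ) * V1 := by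
    rw [sphereArea, ENNReal.ofReal_mul (by positivity), ENNReal.ofReal_toReal hV1top.ne,
      ENNReal.ofReal_natCast]
  have hs2 : ENNReal.ofReal (sphereArea (n+2)) = (n+2 : ℕ) * V2 := by
    rw [sphereArea, ENNReal.ofReal_mul (by positivity), ENNReal.ofReal_toReal hV2top.ne,
      ENNReal.ofReal_natCast]
  have hs1nn : 0 ≤ sphereArea (n+1) := mul_nonneg (by positivity) ENNReal.toReal_nonneg
  have hs2pos : 0 < sphereArea (n+2) := by
    refine mul_pos (by positivity) (ENNReal.toReal_pos hV2pos.ne' hV2top.ne)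
  -- measurability and integrability
  have hπAmeas : Measurable πA := by
    have h : πA = fun ξ => πAs ‖ξ‖ := funext hradial
    rw [h]; exact hmeas.comp measurable_norm
  have hint : Integrable πA := by
    by_contra h; rw [integral_undef h] at hprob; exact one_ne_zero hprob.symm
  have hlint : ∫⁻ ξ : EuclideanSpace ℝ (Fin (n+2)), ENNReal.ofReal (πAs ‖ξ‖) = 1 := by
    rw [show (fun ξ : EuclideanSpace ℝ (Fin (n+2)) => ENNReal.ofReal (πAs ‖ξ‖)) = fun ξ => ENNReal.ofReal (πA ξ) by
      funext ξ; rw [hradial]]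
    rw [← ofReal_integral_eq_lintegral_ofReal hint (Filter.Eventually.of_forall hnonneg), hprob,
      ENNReal.ofReal_one]
  have hradint : ∫⁻ s in Ioi (0:ℝ), ENNReal.ofReal (s ^ (n+1)) * ENNReal.ofReal (πAs s)
      = (((n+2 : ℕ) : ℝ≥0∞) * V2)⁻¹ := by
    have h := lintegral_norm_radial (n+2) (fun s => ENNReal.ofReal (πAs s))
      (ENNReal.measurable_ofReal.comp hmeas)
    rw [hlint, hd1] at h
    replace h := h.symm
    have hc0 : ((n+2 : ℕ) : ℝ≥0∞) * V2 ≠ 0 := by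
      simp [hV2pos.ne']
    have hctop : ((n+2 : ℕ) : ℝ≥0∞) * V2 ≠ ⊤ := by
      exact ENNReal.mul_ne_top (by simp) hV2top.ne
    calc ∫⁻ s in Ioi (0:ℝ), ENNReal.ofReal (s ^ (n+1)) * ENNReal.ofReal (πAs s)
        = (((n+2 : ℕ) : ℝ≥0∞) * V2)⁻¹ * ((((n+2 : ℕ) : ℝ≥0∞) * V2) *
            ∫⁻ s in Ioi (0:ℝ), ENNReal.ofReal (s ^ (n+1)) * ENNReal.ofReal (πAs s)) := by
          rw [← mul_assoc, ENNReal.inv_mul_cancel hc0 hctop, one_mul]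
      _ = (((n+2 : ℕ) : ℝ≥0∞) * V2)⁻¹ := by
          rw [h, mul_one]
  -- inner integral bound
  set C : ℝ := sphereArea (n+1) * (πAs 0 + (sphereArea (n+2))⁻¹) with hC
  have hCnn : 0 ≤ C := mul_nonneg hs1nn (add_nonneg hπ0 (inv_nonneg.mpr hs2pos.le))
  have hJ : ∀ t : ℝ, ∫⁻ y : EuclideanSpace ℝ (Fin (n+1)),
      ENNReal.ofReal (πAs (Real.sqrt (t^2 + ‖y‖^2))) ≤ ENNReal.ofReal C := by
    intro t
    have hcont : Continuous fun y : EuclideanSpace ℝ (Fin (n+1)) => Real.sqrt (t^2 + ‖y‖^2) :=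
      (continuous_const.add ((continuous_norm).pow 2)).sqrt
    have hsqle : ∀ y : EuclideanSpace ℝ (Fin (n+1)), ‖y‖ ≤ Real.sqrt (t^2 + ‖y‖^2) := by
      intro y
      calc ‖y‖ = Real.sqrt (‖y‖^2) := (Real.sqrt_sq (norm_nonneg _)).symm
        _ ≤ Real.sqrt (t^2 + ‖y‖^2) := Real.sqrt_le_sqrt (by nlinarith [sq_nonneg t])
    rw [← lintegral_add_compl (fun y : EuclideanSpace ℝ (Fin (n+1)) =>
      ENNReal.ofReal (πAs (Real.sqrt (t^2 + ‖y‖^2))))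
      (measurableSet_ball (x := (0 : EuclideanSpace ℝ (Fin (n+1)))) (ε := 1))]
    have h1 : ∫⁻ y in Metric.ball (0 : EuclideanSpace ℝ (Fin (n+1))) 1,
        ENNReal.ofReal (πAs (Real.sqrt (t^2 + ‖y‖^2)))
        ≤ ENNReal.ofReal (πAs 0) * (((n+1:ℕ) : ℝ≥0∞) * V1) := by
      calc ∫⁻ y in Metric.ball (0 : EuclideanSpace ℝ (Fin (n+1))) 1,
          ENNReal.ofReal (πAs (Real.sqrt (t^2 + ‖y‖^2)))
          ≤ ∫⁻ _y in Metric.ball (0 : EuclideanSpace ℝ (Fin (n+1))) 1, ENNReal.ofReal (πAs 0) :=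
            setLIntegral_mono measurable_const (fun y _ => ENNReal.ofReal_le_ofReal (hmax _))
        _ = ENNReal.ofReal (πAs 0) * V1 := by rw [setLIntegral_const]
        _ ≤ _ := by
            gcongr
            exact le_mul_of_one_le_left zero_le (by simp)
    have hGmeas : Measurable fun s : ℝ =>
        Set.indicator (Set.Ici (1:ℝ)) (fun s => ENNReal.ofReal (πAs s)) s :=
      (ENNReal.measurable_ofReal.comp hmeas).indicator measurableSet_Ici
    have h2 : ∫⁻ y in (Metric.ball (0 : EuclideanSpace ℝ (Fin (n+1))) 1)ᶜ,
        ENNReal.ofReal (πAs (Real.sqrt (t^2 + ‖y‖^2)))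
        ≤ ((n+1:ℕ) : ℝ≥0∞) * V1 * (((n+2 : ℕ) : ℝ≥0∞) * V2)⁻¹ := by
      calc ∫⁻ y in (Metric.ball (0 : EuclideanSpace ℝ (Fin (n+1))) 1)ᶜ,
          ENNReal.ofReal (πAs (Real.sqrt (t^2 + ‖y‖^2)))
          ≤ ∫⁻ y in (Metric.ball (0 : EuclideanSpace ℝ (Fin (n+1))) 1)ᶜ,
              ENNReal.ofReal (πAs ‖y‖) := by
            refine setLIntegral_mono (ENNReal.measurable_ofReal.comp
              (hmeas.comp measurable_norm)) (fun y _ => ?_)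
            exact ENNReal.ofReal_le_ofReal (hmono ‖y‖ _ (norm_nonneg _) (hsqle y))
        _ = ∫⁻ y : EuclideanSpace ℝ (Fin (n+1)),
              Set.indicator (Set.Ici (1:ℝ)) (fun s => ENNReal.ofReal (πAs s)) ‖y‖ := by
            rw [← lintegral_indicator measurableSet_ball.compl]
            congr 1
            funext y
            simp [Set.indicator, Set.mem_compl_iff, mem_ball_zero_iff, Set.mem_Ici, not_lt]
        _ = ((n+1:ℕ) : ℝ≥0∞) * V1 * ∫⁻ s in Ioi (0:ℝ), ENNReal.ofReal (s ^ n) *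
              Set.indicator (Set.Ici (1:ℝ)) (fun s => ENNReal.ofReal (πAs s)) s :=
            lintegral_norm_radial (n+1) _ hGmeas
        _ ≤ ((n+1:ℕ) : ℝ≥0∞) * V1 *
              ∫⁻ s in Ioi (0:ℝ), ENNReal.ofReal (s ^ (n+1)) * ENNReal.ofReal (πAs s) := by
            refine mul_le_mul_right (lintegral_mono fun s => ?_) _
            by_cases hs : (1:ℝ) ≤ s
            · rw [Set.indicator_of_mem (Set.mem_Ici.mpr hs)]
              exact mul_le_mul_left (ENNReal.ofReal_le_ofReal
                (pow_le_pow_right₀ hs (Nat.le_succ n))) _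
            · rw [Set.indicator_of_notMem (fun hc => hs (Set.mem_Ici.mp hc)), mul_zero]
              exact zero_le
        _ = _ := by rw [hradint]
    calc (∫⁻ y in Metric.ball (0 : EuclideanSpace ℝ (Fin (n+1))) 1,
          ENNReal.ofReal (πAs (Real.sqrt (t^2 + ‖y‖^2))))
        + ∫⁻ y in (Metric.ball (0 : EuclideanSpace ℝ (Fin (n+1))) 1)ᶜ,
          ENNReal.ofReal (πAs (Real.sqrt (t^2 + ‖y‖^2)))
        ≤ ENNReal.ofReal (πAs 0) * (((n+1:ℕ) : ℝ≥0∞) * V1)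
            + ((n+1:ℕ) : ℝ≥0∞) * V1 * (((n+2 : ℕ) : ℝ≥0∞) * V2)⁻¹ := add_le_add h1 h2
      _ = ENNReal.ofReal C := by
          have hinv : ENNReal.ofReal ((sphereArea (n+2))⁻¹) = (((n+2:ℕ):ℝ≥0∞) * V2)⁻¹ := by
            rw [ENNReal.ofReal_inv_of_pos hs2pos, hs2]
          rw [hC, ENNReal.ofReal_mul hs1nn, ENNReal.ofReal_add hπ0 (inv_nonneg.mpr hs2pos.le),
            hs1, hinv]
          ring
  -- orthonormal basis adapted to x
  set u : EuclideanSpace ℝ (Fin (n+2)) := ‖x‖⁻¹ • x with hudef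
  have hu : ‖u‖ = 1 := norm_smul_inv_norm hx
  set B0 := EuclideanSpace.basisFun (Fin (n+2)) ℝ with hB0
  have hB0norm : ‖B0 0‖ = 1 := B0.orthonormal.1 0
  have hR : (Submodule.reflection (ℝ ∙ (B0 0 - u))ᗮ) (B0 0) = u := Submodule.reflection_sub (by rw [hB0norm, hu])
  set b := B0.map (Submodule.reflection (ℝ ∙ (B0 0 - u))ᗮ) with hb
  have hb0 : b 0 = u := by rw [hb, OrthonormalBasis.map_apply, hR]
  have hinner : ∀ ξ : EuclideanSpace ℝ (Fin (n+2)), (inner ℝ x ξ : ℝ) = ‖x‖ * b.repr ξ 0 := by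
    intro ξ
    have hxu : (‖x‖ : ℝ) • u = x := smul_inv_smul₀ hxn.ne' x
    conv_lhs => rw [← hxu]
    rw [real_inner_smul_left, b.repr_apply_apply, hb0]
  -- the product decomposition
  set Φ : EuclideanSpace ℝ (Fin (n+2)) ≃ᵐ ℝ × EuclideanSpace ℝ (Fin (n+1)) :=
    (b.measurableEquiv.trans (MeasurableEquiv.toLp 2 (Fin (n+2) → ℝ)).symm).trans
      ((MeasurableEquiv.piFinSuccAbove (fun _ : Fin (n+2) => ℝ) 0).trans
        ((MeasurableEquiv.refl ℝ).prodCongr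
          (MeasurableEquiv.toLp 2 (Fin (n+1) → ℝ)))) with hPhidef
  have hPhimp : MeasurePreserving Φ volume volume := by
    have h1 := b.measurePreserving_measurableEquiv
    have h2 := EuclideanSpace.volume_preserving_symm_measurableEquiv_toLp (Fin (n+2))
    have h3 := volume_preserving_piFinSuccAbove (fun _ : Fin (n+2) => ℝ) 0
    have h4 := (MeasurePreserving.id (volume : Measure ℝ)).prod
      (EuclideanSpace.volume_preserving_symm_measurableEquiv_toLp (Fin (n+1))).symm
    exact (h4.comp h3).comp (h2.comp h1)
  have hfst : ∀ ξ, (Φ ξ).1 = b.repr ξ 0 := fun ξ => rfl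
  have hsndapp : ∀ (ξ) (j : Fin (n+1)), (Φ ξ).2 j = b.repr ξ j.succ := fun ξ j => rfl
  have hnorm : ∀ ξ : EuclideanSpace ℝ (Fin (n+2)),
      ‖ξ‖ = Real.sqrt ((Φ ξ).1^2 + ‖(Φ ξ).2‖^2) := by
    intro ξ
    have h1 : ‖ξ‖ = ‖b.repr ξ‖ := (b.repr.norm_map ξ).symm
    rw [h1, EuclideanSpace.norm_eq, EuclideanSpace.norm_eq]
    rw [Real.sq_sqrt (Finset.sum_nonneg fun j _ => by positivity)]
    congr 1
    rw [Fin.sum_univ_succ]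
    congr 1
    rw [hfst, Real.norm_eq_abs, sq_abs]
  -- slab sets
  set S : Set (EuclideanSpace ℝ (Fin (n+2))) := {ξ | |(inner ℝ x ξ : ℝ)| ≤ δ} with hS
  set T : Set (ℝ × EuclideanSpace ℝ (Fin (n+1))) := {p | |‖x‖ * p.1| ≤ δ} with hT
  have hTmeas : MeasurableSet T :=
    measurableSet_le ((measurable_const.mul measurable_fst).abs) measurable_const
  have hSmeas : MeasurableSet S := by
    have hc : Continuous fun ξ : EuclideanSpace ℝ (Fin (n+2)) => |(inner ℝ x ξ : ℝ)| :=
      (continuous_const.inner continuous_id).abs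
    exact measurableSet_le hc.measurable measurable_const
  have hkey : ∀ p : ℝ × EuclideanSpace ℝ (Fin (n+1)),
      S.indicator (fun ξ => ENNReal.ofReal (πA ξ)) (Φ.symm p)
        = T.indicator (fun q : ℝ × EuclideanSpace ℝ (Fin (n+1)) =>
            ENNReal.ofReal (πAs (Real.sqrt (q.1^2 + ‖q.2‖^2)))) p := by
    intro p
    have hps : Φ (Φ.symm p) = p := Φ.apply_symm_apply p
    have hmem : Φ.symm p ∈ S ↔ p ∈ T := by
      rw [hS, hT]
      simp only [Set.mem_setOf_eq]
      rw [hinner, ← hfst, hps]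
    have hval : πA (Φ.symm p) = πAs (Real.sqrt (p.1^2 + ‖p.2‖^2)) := by
      rw [hradial, hnorm, hps]
    by_cases hp : p ∈ T
    · rw [Set.indicator_of_mem (hmem.mpr hp), Set.indicator_of_mem hp, hval]
    · rw [Set.indicator_of_notMem (fun hc => hp (hmem.mp hc)), Set.indicator_of_notMem hp]
  have hFm : Measurable fun p : ℝ × EuclideanSpace ℝ (Fin (n+1)) =>
      ENNReal.ofReal (πAs (Real.sqrt (p.1^2 + ‖p.2‖^2))) := by
    apply ENNReal.measurable_ofReal.comp
    apply hmeas.comp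
    exact (Real.continuous_sqrt.comp
      ((continuous_fst.pow 2).add ((continuous_snd.norm).pow 2))).measurable
  have hmain : ∫⁻ ξ in S, ENNReal.ofReal (πA ξ) ≤ ENNReal.ofReal (C * (2 * (δ / ‖x‖))) := by
    calc ∫⁻ ξ in S, ENNReal.ofReal (πA ξ)
        = ∫⁻ ξ, S.indicator (fun ξ => ENNReal.ofReal (πA ξ)) ξ :=
          (lintegral_indicator hSmeas _).symm
      _ = ∫⁻ p : ℝ × EuclideanSpace ℝ (Fin (n+1)),
            S.indicator (fun ξ => ENNReal.ofReal (πA ξ)) (Φ.symm p) :=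
          ((hPhimp.symm Φ).lintegral_comp_emb Φ.symm.measurableEmbedding _).symm
      _ = ∫⁻ p : ℝ × EuclideanSpace ℝ (Fin (n+1)), T.indicator (fun q =>
            ENNReal.ofReal (πAs (Real.sqrt (q.1^2 + ‖q.2‖^2)))) p := by
          congr 1
          funext p
          exact hkey p
      _ = ∫⁻ t : ℝ, ∫⁻ y : EuclideanSpace ℝ (Fin (n+1)), T.indicator (fun q =>
            ENNReal.ofReal (πAs (Real.sqrt (q.1^2 + ‖q.2‖^2)))) (t, y) := by
          rw [Measure.volume_eq_prod, lintegral_prod _ ((hFm.indicator hTmeas).aemeasurable)]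
      _ ≤ ∫⁻ t : ℝ, (Set.Icc (-(δ/‖x‖)) (δ/‖x‖)).indicator (fun _ => ENNReal.ofReal C) t := by
          apply lintegral_mono
          intro t
          by_cases ht : |‖x‖ * t| ≤ δ
          · have htmem : t ∈ Set.Icc (-(δ/‖x‖)) (δ/‖x‖) := by
              rw [abs_mul, abs_of_pos hxn, mul_comm] at ht
              exact Set.mem_Icc.mpr (abs_le.mp ((le_div_iff₀ hxn).mpr ht))
            rw [Set.indicator_of_mem htmem]
            refine le_trans (le_of_eq (lintegral_congr fun y =>
              Set.indicator_of_mem (show (t, y) ∈ T from ht) _)) (hJ t)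
          · refine le_trans (le_of_eq ?_) zero_le
            calc ∫⁻ y : EuclideanSpace ℝ (Fin (n+1)), T.indicator (fun q =>
                  ENNReal.ofReal (πAs (Real.sqrt (q.1^2 + ‖q.2‖^2)))) (t, y)
                = ∫⁻ _y : EuclideanSpace ℝ (Fin (n+1)), 0 :=
                  lintegral_congr fun y => Set.indicator_of_notMem
                    (show (t, y) ∉ T from ht) _
              _ = 0 := lintegral_zero
      _ = ENNReal.ofReal C * volume (Set.Icc (-(δ/‖x‖)) (δ/‖x‖)) :=
          lintegral_indicator_const measurableSet_Icc _
      _ = ENNReal.ofReal (C * (2 * (δ/‖x‖))) := by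
          rw [Real.volume_Icc, ← ENNReal.ofReal_mul hCnn]
          congr 1
          ring
  have hLHS : ∫ ξ in S, πA ξ = (∫⁻ ξ in S, ENNReal.ofReal (πA ξ)).toReal := by
    rw [integral_eq_lintegral_of_nonneg_ae (Filter.Eventually.of_forall hnonneg)
      hπAmeas.aestronglyMeasurable]
  rw [hLHS, hd1, show (2 * sphereArea (n+1) * δ / ‖x‖) * (πAs 0 + (sphereArea (n+2))⁻¹)
    = C * (2 * (δ/‖x‖)) from by rw [hC]; ring]
  exact ENNReal.toReal_le_of_le_ofReal (mul_nonneg hCnn (by positivity)) hmain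
end
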